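/- Let a_1, ..., a_n be positive integers with total sum B, let s be even with s ≤ B, and let M = B/2 − s/2. For any partition of the multiset {a_1, ..., a_n, −M, −M} into exactly two parts, each containing one copy of −M, if the positive integers appearing in the first part sum to a, then the sum of squared part sums equals s²/2 + 2(a − B/2)². In particular it is at least s²/2, with equality if and only if a = B/2. -/
import Mathlib


open Finset

/-- The ground multiset of the reduction: the positive integers `a 1, ..., a n`
(as real numbers) together with two copies of `-M`. -/
noncomputable def ground {n : ℕ} (a : Fin n → ℤ) (M : ℝ) : Multiset ℝ :=
  (Finset.univ.val.map (fun i => ((a i : ℤ) : ℝ))) + Multiset.replicate 2 (-M)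

/-- `parts` is a partition of the multiset `S` into nonempty parts. -/
def IsPartitionOf (parts : Multiset (Multiset ℝ)) (S : Multiset ℝ) : Prop :=
  parts.sum = S ∧ (0 : Multiset ℝ) ∉ parts

/-- The RONE-CC objective: the sum of the squares of the part sums. -/
noncomputable def roneObj (parts : Multiset (Multiset ℝ)) : ℝ :=
  (parts.map (fun C => C.sum ^ 2)).sum

/-- For a partition of `{a 1, ..., a n, -M, -M}` into exactly two parts, each
containing one copy of `-M`, if the positive integers in the first part sum to `α`,
then the sum of squared part sums equals `s²/2 + 2(α - B/2)²`; in particular it is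
at least `s²/2`, with equality iff `α = B/2`. -/
theorem roneObj_two_part_formula {n : ℕ} (a : Fin n → ℤ) (s B : ℤ) (M α : ℝ)
    (hpos : ∀ i, 0 < a i) (hB : B = ∑ i, a i) (hseven : Even s) (hsB : s ≤ B)
    (hM : M = (B : ℝ) / 2 - (s : ℝ) / 2)
    (C₁ C₂ : Multiset ℝ) (hsplit : C₁ + C₂ = ground a M)
    (h₁ : C₁.count (-M) = 1) (h₂ : C₂.count (-M) = 1)
    (hα : (C₁.filter (fun x => x ≠ -M)).sum = α) :
    C₁.sum ^ 2 + C₂.sum ^ 2 = (s : ℝ) ^ 2 / 2 + 2 * (α - (B : ℝ) / 2) ^ 2 ∧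
    (s : ℝ) ^ 2 / 2 ≤ C₁.sum ^ 2 + C₂.sum ^ 2 ∧
    (C₁.sum ^ 2 + C₂.sum ^ 2 = (s : ℝ) ^ 2 / 2 ↔ α = (B : ℝ) / 2) := by
  -- C₁.sum = α - M
  have hC1 : C₁.sum = α - M := by
    have hsplit1 : C₁.filter (fun x => x ≠ -M) + C₁.filter (fun x => ¬ x ≠ -M) = C₁ :=
      Multiset.filter_add_not _ _
    have heq : C₁.filter (fun x => ¬ x ≠ -M) = Multiset.replicate 1 (-M) := by
      have : C₁.filter (fun x => ¬ x ≠ -M) = C₁.filter (fun x => x = -M) := by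
        apply Multiset.filter_congr; intro x _; simp
      rw [this]
      have := Multiset.filter_eq' C₁ (-M)
      rw [this, h₁]
    have := congrArg Multiset.sum hsplit1
    rw [Multiset.sum_add, heq, hα] at this
    simp at this
    linarith [this]
  -- total sum
  have htot : C₁.sum + C₂.sum = (s : ℝ) := by
    have := congrArg Multiset.sum hsplit
    rw [Multiset.sum_add] at this
    have hg : (ground a M).sum = (B : ℝ) - 2 * M := by
      unfold ground
      rw [Multiset.sum_add, Multiset.sum_replicate]
      have : (Finset.univ.val.map (fun i => ((a i : ℤ) : ℝ))).sum = ∑ i, ((a i : ℤ) : ℝ) := rfl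
      rw [this, hB]
      push_cast
      ring
    rw [hg, hM] at this
    linarith [this]
  have hC2 : C₂.sum = (s : ℝ) / 2 - (α - (B : ℝ) / 2) := by
    rw [hM] at hC1; linarith
  have hC1' : C₁.sum = (s : ℝ) / 2 + (α - (B : ℝ) / 2) := by
    rw [hM] at hC1; linarith
  have key : C₁.sum ^ 2 + C₂.sum ^ 2 = (s : ℝ) ^ 2 / 2 + 2 * (α - (B : ℝ) / 2) ^ 2 := by
    rw [hC1', hC2]; ring
  refine ⟨key, ?_, ?_⟩
  · nlinarith [sq_nonneg (α - (B : ℝ) / 2)]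
  · rw [key]
    constructor
    · intro h
      have : (α - (B : ℝ) / 2) ^ 2 = 0 := by linarith
      have := pow_eq_zero_iff (n := 2) (by norm_num) |>.mp this
      linarith
    · intro h; rw [h]; ring
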